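/- Let E be a real inner product space, X ⊆ E a nonempty convex set, d : E → ℝ a convex Fréchet-differentiable function with Bregman divergence V(y,x) := d(y) − d(x) − ⟨∇d(x), y − x⟩, μ ≥ 0, and g : E → E a μ-relatively strongly monotone operator on X. If x* ∈ X is a solution of the Minty variational inequality for g on X, then for every z ∈ X: ⟨g(z), z − x*⟩ ≥ μ·( V(z, x*) + V(x*, z) ); in particular ⟨g(z), z − x*⟩ ≥ μ·V(x*, z). -/

import Mathlib

open scoped RealInnerProductSpace

/-- Weak (Minty) solutions are strong solutions for μ-relatively strongly
monotone operators. -/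
theorem minty_solution_is_strong_solution
    {E : Type*} [NormedAddCommGroup E] [InnerProductSpace ℝ E] [CompleteSpace E]
    (X : Set E) (hXne : X.Nonempty) (hXconv : Convex ℝ X)
    (d : E → ℝ) (hdconv : ConvexOn ℝ Set.univ d)
    (Dd : E → E) (hd : ∀ x, HasGradientAt d (Dd x) x)
    (V : E → E → ℝ) (hV : ∀ y x, V y x = d y - d x - ⟪Dd x, y - x⟫)
    (μ : ℝ) (hμ : 0 ≤ μ) (g : E → E)
    (hmono : ∀ x ∈ X, ∀ y ∈ X, μ * (V y x + V x y) ≤ ⟪g y - g x, y - x⟫)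
    (xs : E) (hxs : xs ∈ X) (hMinty : ∀ x ∈ X, ⟪g x, xs - x⟫ ≤ 0) :
    ∀ z ∈ X, μ * (V z xs + V xs z) ≤ ⟪g z, z - xs⟫ ∧ μ * V xs z ≤ ⟪g z, z - xs⟫ := by
  intro z hz
  set c := z - xs with hc
  set φ : ℝ → ℝ := fun t => d (xs + t • c) with hφ
  set D : ℝ → ℝ := fun t => ⟪Dd (xs + t • c), c⟫ with hD
  -- points on the segment are in X
  have hline : ∀ t : ℝ, 0 ≤ t → t ≤ 1 → xs + t • c ∈ X := by
    intro t ht0 ht1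
    have h := hXconv hxs hz (by linarith : (0:ℝ) ≤ 1 - t) ht0 (by ring)
    have : xs + t • c = (1 - t) • xs + t • z := by
      simp only [hc, smul_sub, sub_smul, one_smul]; abel
    rw [this]; exact h
  -- derivative of φ
  have hφd : ∀ t : ℝ, HasDerivAt φ (D t) t := by
    intro t
    have hL : HasDerivAt (fun s : ℝ => xs + s • c) c t := by
      simpa using ((hasDerivAt_id t).smul_const c).const_add xs
    have := (hd (xs + t • c)).hasFDerivAt.comp_hasDerivAt t hL
    simp [hD] at this
    exact this
  -- convexity of φ
  have hφconv : ConvexOn ℝ Set.univ φ := by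
    have h := hdconv.comp_affineMap (AffineMap.lineMap xs z : ℝ →ᵃ[ℝ] E)
    have heq : (d ∘ (AffineMap.lineMap xs z : ℝ →ᵃ[ℝ] E)) = φ := by
      funext t
      simp [hφ, AffineMap.lineMap_apply, hc]
      congr 1
      abel
    rw [heq] at h
    simpa using h
  have hz1 : xs + (1:ℝ) • c = z := by simp [hc]
  have hz0 : xs + (0:ℝ) • c = xs := by simp
  -- key inequality on (0,1)
  have hkey : ∀ t : ℝ, 0 < t → t < 1 → μ * (D 1 - D t) ≤ ⟪g z, c⟫ := by
    intro t ht0 ht1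
    set p := xs + t • c with hp
    have hpX : p ∈ X := hline t ht0.le ht1.le
    have hzp : z - p = (1 - t) • c := by
      simp only [hp, hc, smul_sub, sub_smul, one_smul]; abel
    -- Minty at p
    have hMp : 0 ≤ ⟪g p, c⟫ := by
      have h := hMinty p hpX
      have : xs - p = -(t • c) := by simp [hp]
      rw [this, inner_neg_right, real_inner_smul_right] at h
      nlinarith
    -- monotonicity at (p, z)
    have hm := hmono p hpX z hz
    have hVsum : V z p + V p z = (1 - t) * (D 1 - D t) := by
      rw [hV, hV, hzp]
      have hpz : p - z = -((1 - t) • c) := by rw [← hzp]; abel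
      rw [hpz, inner_neg_right, real_inner_smul_right, real_inner_smul_right]
      rw [hD]
      simp only [hz1]
      ring
    have hrhs : ⟪g z - g p, z - p⟫ ≤ (1 - t) * ⟪g z, c⟫ := by
      rw [hzp, inner_smul_right, inner_sub_left]
      have : ⟪g z, c⟫ - ⟪g p, c⟫ ≤ ⟪g z, c⟫ := by linarith
      exact mul_le_mul_of_nonneg_left this (by linarith)
    have := hm.trans hrhs
    rw [hVsum] at this
    have h1t : (0:ℝ) < 1 - t := by linarith
    nlinarith
  -- D t → D 0 as t → 0⁺, by squeezing between slopes
  have hslope : Filter.Tendsto (slope φ 0) (nhdsWithin 0 (Set.Ioi 0)) (nhds (D 0)) := by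
    have := hasDerivAt_iff_tendsto_slope.mp (hφd 0)
    exact this.mono_left (nhdsWithin_mono _ (fun x hx => ne_of_gt hx))
  have h2t : Filter.Tendsto (fun t : ℝ => slope φ 0 (2 * t)) (nhdsWithin 0 (Set.Ioi 0))
      (nhds (D 0)) := by
    apply hslope.comp
    rw [tendsto_nhdsWithin_iff]
    constructor
    · have h0 : Filter.Tendsto (fun t : ℝ => 2 * t) (nhds 0) (nhds 0) := by
        simpa using (continuous_mul_left (2:ℝ)).tendsto (0:ℝ)
      exact h0.mono_left nhdsWithin_le_nhds
    · filter_upwards [self_mem_nhdsWithin] with t ht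
      exact mul_pos two_pos (show (0:ℝ) < t from ht)
  have hDlim : Filter.Tendsto D (nhdsWithin 0 (Set.Ioi 0)) (nhds (D 0)) := by
    have hub : Filter.Tendsto (fun t : ℝ => 2 * slope φ 0 (2 * t) - slope φ 0 t)
        (nhdsWithin 0 (Set.Ioi 0)) (nhds (2 * D 0 - D 0)) := (h2t.const_mul 2).sub hslope
    rw [show 2 * D 0 - D 0 = D 0 by ring] at hub
    refine tendsto_of_tendsto_of_tendsto_of_le_of_le' hslope hub ?_ ?_
    · filter_upwards [self_mem_nhdsWithin] with t ht
      exact hφconv.slope_le_of_hasDerivAt trivial trivial ht (hφd t)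
    · filter_upwards [self_mem_nhdsWithin] with t ht
      have ht0 : (0:ℝ) < t := ht
      have h1 : D t ≤ slope φ t (2 * t) :=
        hφconv.le_slope_of_hasDerivAt trivial trivial (by linarith) (hφd t)
      have h2 : slope φ t (2 * t) = 2 * slope φ 0 (2 * t) - slope φ 0 t := by
        rw [slope_def_field, slope_def_field, slope_def_field,
          show 2 * t - t = t by ring, sub_zero, sub_zero]
        have ht' : t ≠ 0 := ne_of_gt ht0
        field_simp
        ring
      linarith [h2 ▸ h1]
  -- pass to the limit
  have hfinal : μ * (D 1 - D 0) ≤ ⟪g z, c⟫ := by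
    have htend : Filter.Tendsto (fun t : ℝ => μ * (D 1 - D t)) (nhdsWithin 0 (Set.Ioi 0))
        (nhds (μ * (D 1 - D 0))) := (tendsto_const_nhds.sub hDlim).const_mul μ
    refine le_of_tendsto htend ?_
    have : Set.Ioo (0:ℝ) 1 ∈ nhdsWithin (0:ℝ) (Set.Ioi 0) := by
      apply Ioo_mem_nhdsGT_of_mem
      exact ⟨le_refl 0, one_pos⟩
    filter_upwards [this] with t ht
    exact hkey t ht.1 ht.2
  -- identify D 1 - D 0 with the Bregman terms
  have hVid : V z xs + V xs z = D 1 - D 0 := by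
    rw [hV, hV, hD]
    simp only [hz0, hz1]
    have : xs - z = -c := by rw [hc]; abel
    rw [this, inner_neg_right, ← hc]
    ring
  have hVzxs : 0 ≤ V z xs := by
    rw [hV]
    have h := hφconv.le_slope_of_hasDerivAt (trivial : (0:ℝ) ∈ Set.univ) trivial one_pos (hφd 0)
    rw [slope_def_field] at h
    simp only [hφ, hz0, hz1, hD] at h ⊢
    rw [← hc]
    linarith
  constructor
  · rw [hVid]; exact hfinal
  · have : μ * V xs z ≤ μ * (V z xs + V xs z) :=
      mul_le_mul_of_nonneg_left (by linarith) hμ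
    rw [hVid] at this
    exact this.trans hfinal
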